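/- Let E be a Banach space with a normalized 1-unconditional basis (𝐞_i) and let 𝓕₁, 𝓕₂ be combinatorial families. (1) If (𝐞_i) is strictly 1-unconditional, then any permutation π of ℕ that induces an isometry J : X_{𝓕₁,E} → X_{𝓕₂,E} via Je_i = e_{π(i)} must satisfy π(𝓕₁) = 𝓕₂. (2) If (𝐞_i) is both strictly 1-unconditional and 1-symmetric, then any permutation π of ℕ that induces an isometry J : Z_{𝓕₁,E} → Z_{𝓕₂,E} via Je_i^* = e_{π(i)}^* must satisfy π(𝓕₁) = 𝓕₂. -/

import Mathlib

open Filter Topology NormedSpace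

noncomputable section

/-- A combinatorial family: a family of finite subsets of `ℕ` containing all
singletons and hereditary for inclusion. -/
def IsCombFamily (𝓕 : Set (Finset ℕ)) : Prop :=
  (∀ n : ℕ, ({n} : Finset ℕ) ∈ 𝓕) ∧ ∀ F ∈ 𝓕, ∀ G : Finset ℕ, G ⊆ F → G ∈ 𝓕

/-- A family of finite subsets of `ℕ` is compact if it is closed in `{0,1}^ℕ`,
identifying sets with their characteristic functions. -/
def IsCompactFamily (𝓕 : Set (Finset ℕ)) : Prop :=
  IsClosed {f : ℕ → Bool | ∃ F ∈ 𝓕, ∀ n, f n = true ↔ n ∈ F}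

/-- The closure of the family `𝓕` in `{0,1}^ℕ`: all sets every finite subset of
which belongs to `𝓕`. -/
def famClosure (𝓕 : Set (Finset ℕ)) : Set (Set ℕ) :=
  {A | ∀ G : Finset ℕ, ↑G ⊆ A → G ∈ 𝓕}

/-- Maximal elements of a family. -/
def famMax (𝓕 : Set (Finset ℕ)) : Set (Finset ℕ) :=
  {F | F ∈ 𝓕 ∧ ∀ G ∈ 𝓕, F ⊆ G → F = G}

/-- A spreading family. -/
def IsSpreading (𝓕 : Set (Finset ℕ)) : Prop :=
  ∀ F ∈ 𝓕, ∀ σ : ℕ → ℕ, (∀ n ∈ F, n ≤ σ n) → Finset.image σ F ∈ 𝓕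

/-- `X`, with distinguished sequence `e`, is (a realization of) the `p`-convexification
`X_{𝓕,p}` of the combinatorial Banach space associated with `𝓕`: the canonical vectors
have dense linear span, and finitely supported vectors have the norm
`sup { (∑_{i∈F} |a i|^p)^{1/p} : F ∈ 𝓕 }`. -/
structure IsXFp (𝕜 : Type*) [RCLike 𝕜] (𝓕 : Set (Finset ℕ)) (p : ℝ)
    (X : Type*) [NormedAddCommGroup X] [NormedSpace 𝕜 X] (e : ℕ → X) : Prop where
  dense_span : Dense (Submodule.span 𝕜 (Set.range e) : Set X)
  norm_eq : ∀ a : ℕ →₀ 𝕜,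
    ‖∑ i ∈ a.support, a i • e i‖ =
      sSup {r : ℝ | ∃ F ∈ 𝓕, r = (∑ i ∈ F, ‖a i‖ ^ p) ^ (1 / p)}

/-- `(b, bs)` is a normalized 1-unconditional Schauder basis of `E` together with its
coordinate functionals. -/
structure IsNUBasis (𝕜 : Type*) [RCLike 𝕜] (E : Type*)
    [NormedAddCommGroup E] [NormedSpace 𝕜 E]
    (b : ℕ → E) (bs : ℕ → StrongDual 𝕜 E) : Prop where
  biortho : ∀ i j, bs i (b j) = if i = j then 1 else 0
  normalized : ∀ i, ‖b i‖ = 1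
  expansion : ∀ x : E,
    Tendsto (fun N => ∑ i ∈ Finset.range N, bs i x • b i) atTop (nhds x)
  unconditional : ∀ a : ℕ →₀ 𝕜, ∀ ω : ℕ → 𝕜, (∀ i, ‖ω i‖ = 1) →
    ‖∑ i ∈ a.support, ω i • a i • b i‖ = ‖∑ i ∈ a.support, a i • b i‖

/-- `X`, with distinguished sequence `e`, is (a realization of) `X_{𝓕,E}`. -/
structure IsXFE (𝕜 : Type*) [RCLike 𝕜] (𝓕 : Set (Finset ℕ))
    (E : Type*) [NormedAddCommGroup E] [NormedSpace 𝕜 E] (b : ℕ → E)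
    (X : Type*) [NormedAddCommGroup X] [NormedSpace 𝕜 X] (e : ℕ → X) : Prop where
  dense_span : Dense (Submodule.span 𝕜 (Set.range e) : Set X)
  norm_eq : ∀ a : ℕ →₀ 𝕜,
    ‖∑ i ∈ a.support, a i • e i‖ =
      sSup {r : ℝ | ∃ F ∈ 𝓕, r = ‖∑ i ∈ F, a i • b i‖}

/-- A normed space is strictly convex if its unit sphere contains no nontrivial
segments. -/
def IsStrictlyConvexSp (Y : Type*) [NormedAddCommGroup Y] : Prop :=
  ∀ u v : Y, ‖u‖ = 1 → ‖v‖ = 1 → u ≠ v → ‖u + v‖ < 2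

/-- `x` is an extreme point of the closed unit ball of `Y`. -/
def IsExtremePtBall {Y : Type*} [NormedAddCommGroup Y] (x : Y) : Prop :=
  ‖x‖ ≤ 1 ∧ ∀ u v : Y, ‖u‖ ≤ 1 → ‖v‖ ≤ 1 → u + v = x + x → u = x ∧ v = x

/-- `x` is an extreme point of the closed unit ball of the subspace `M`. -/
def IsExtremePtBallIn {𝕜 Y : Type*} [RCLike 𝕜] [NormedAddCommGroup Y] [NormedSpace 𝕜 Y]
    (M : Submodule 𝕜 Y) (x : Y) : Prop :=
  x ∈ M ∧ ‖x‖ ≤ 1 ∧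
    ∀ u v : Y, u ∈ M → v ∈ M → ‖u‖ ≤ 1 → ‖v‖ ≤ 1 → u + v = x + x → u = x ∧ v = x

/-- The basis `b` is strictly 1-unconditional. -/
def StrictlyUnconditional (𝕜 : Type*) [RCLike 𝕜] {E : Type*}
    [NormedAddCommGroup E] [NormedSpace 𝕜 E] (b : ℕ → E) : Prop :=
  ∀ a c : ℕ →₀ 𝕜, (∀ i, ‖a i‖ ≤ ‖c i‖) → (∃ i, ‖a i‖ < ‖c i‖) →
    ‖∑ i ∈ c.support, a i • b i‖ < ‖∑ i ∈ c.support, c i • b i‖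

/-- The basis `b` is 1-symmetric: every permutation of `ℕ` induces a surjective
linear isometry of `E` permuting the basis vectors. -/
def IsSymmetricBasis (𝕜 : Type*) [RCLike 𝕜] {E : Type*}
    [NormedAddCommGroup E] [NormedSpace 𝕜 E] (b : ℕ → E) : Prop :=
  ∀ σ : Equiv.Perm ℕ, ∃ T : E ≃ₗᵢ[𝕜] E, ∀ i, T (b i) = b (σ i)

/-- Condition (H): for `j ≠ k`, any linear isometric embedding of `span(bs j, bs k)`
into the dual of `E` sends `bs j` and `bs k` to functionals with disjoint supports. -/
def CondH (𝕜 : Type*) [RCLike 𝕜] {E : Type*} [NormedAddCommGroup E] [NormedSpace 𝕜 E]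
    (b : ℕ → E) (bs : ℕ → StrongDual 𝕜 E) : Prop :=
  ∀ j k : ℕ, j ≠ k →
    ∀ T : ↥(Submodule.span 𝕜 {bs j, bs k}) →ₗᵢ[𝕜] StrongDual 𝕜 E,
      ∀ i : ℕ,
        T ⟨bs j, Submodule.subset_span (Set.mem_insert _ _)⟩ (b i) = 0 ∨
        T ⟨bs k, Submodule.subset_span (Set.mem_insert_of_mem _ rfl)⟩ (b i) = 0

/-- `span(u,v)` is isometrically equal to `ℓ₂(2)`. -/
def SpanIsL2 (𝕜 : Type*) [RCLike 𝕜] {Y : Type*} [NormedAddCommGroup Y] [NormedSpace 𝕜 Y]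
    (u v : Y) : Prop :=
  ∀ a c : 𝕜, ‖a • u + c • v‖ ^ 2 = ‖a‖ ^ 2 + ‖c‖ ^ 2


section Aux

variable {𝕜 : Type*} [RCLike 𝕜] {E : Type*} [NormedAddCommGroup E] [NormedSpace 𝕜 E]
  {b : ℕ → E} {bs : ℕ → StrongDual 𝕜 E}

/-- Indicator finsupp of a finset, with value 1. -/
def indF (𝕜 : Type*) [RCLike 𝕜] (F : Finset ℕ) : ℕ →₀ 𝕜 :=
  ⟨F, fun i => if i ∈ F then 1 else 0, by intro a; by_cases h : a ∈ F <;> simp [h]⟩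

@[simp] lemma indF_apply (F : Finset ℕ) (i : ℕ) :
    indF 𝕜 F i = if i ∈ F then 1 else 0 := rfl

@[simp] lemma indF_support (F : Finset ℕ) : (indF 𝕜 F).support = F := rfl

lemma sum_indF_smul {M : Type*} [AddCommGroup M] [Module 𝕜 M] (F G : Finset ℕ) (v : ℕ → M) :
    ∑ i ∈ G, indF 𝕜 F i • v i = ∑ i ∈ G ∩ F, v i := by
  rw [← Finset.sum_ite_mem G F v]
  refine Finset.sum_congr rfl fun i _ => ?_
  by_cases h : i ∈ F <;> simp [h]

lemma sum_indF_smul_of_subset {M : Type*} [AddCommGroup M] [Module 𝕜 M] {F G : Finset ℕ}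
    (h : G ⊆ F) (v : ℕ → M) : ∑ i ∈ G, indF 𝕜 F i • v i = ∑ i ∈ G, v i := by
  rw [sum_indF_smul, Finset.inter_eq_left.mpr h]

/-- Suppression 1-unconditionality. -/
lemma supp_le (hE : IsNUBasis 𝕜 E b bs) (c : ℕ →₀ 𝕜) (H : Finset ℕ) :
    ‖∑ i ∈ H, c i • b i‖ ≤ ‖∑ i ∈ c.support, c i • b i‖ := by
  classical
  have hred : ∑ i ∈ H, c i • b i = ∑ i ∈ H ∩ c.support, c i • b i := by
    refine (Finset.sum_subset Finset.inter_subset_left fun i hi hni => ?_).symm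
    have : c i = 0 := by
      by_contra h
      exact hni (Finset.mem_inter.mpr ⟨hi, Finsupp.mem_support_iff.mpr h⟩)
    simp [this]
  set H' := H ∩ c.support with hH'
  set ω : ℕ → 𝕜 := fun i => if i ∈ H' then 1 else -1 with hω
  have hωn : ∀ i, ‖ω i‖ = 1 := by
    intro i; by_cases h : i ∈ H' <;> simp [hω, h]
  have hu := hE.unconditional c ω hωn
  set u := ∑ i ∈ c.support, ω i • c i • b i with hud
  set v := ∑ i ∈ c.support, c i • b i with hvd
  have key : v + u = (2:𝕜) • ∑ i ∈ H', c i • b i := by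
    rw [hud, hvd, ← Finset.sum_add_distrib, Finset.smul_sum]
    rw [show ∑ i ∈ H', (2:𝕜) • (c i • b i)
        = ∑ i ∈ c.support, (if i ∈ H' then (2:𝕜) • (c i • b i) else 0) by
      rw [Finset.sum_ite_mem]
      rw [Finset.inter_comm, hH', Finset.inter_assoc, Finset.inter_self]]
    refine Finset.sum_congr rfl fun i _ => ?_
    by_cases h : i ∈ H' <;> simp [hω, h, two_smul]
  have : ‖∑ i ∈ H', c i • b i‖ ≤ ‖v‖ := by
    have h2 : ∑ i ∈ H', c i • b i = ((2:𝕜)⁻¹) • (v + u) := by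
      rw [key, smul_smul]; norm_num
    calc ‖∑ i ∈ H', c i • b i‖ = ‖(2:𝕜)⁻¹‖ * ‖v + u‖ := by rw [h2, norm_smul]
      _ ≤ (2⁻¹ : ℝ) * (‖v‖ + ‖u‖) := by
          gcongr
          · simp
          · exact norm_add_le _ _
      _ = ‖v‖ := by rw [hu]; ring
  rw [hred]; exact this

/-- Monotonicity for indicator sums. -/
lemma norm_sum_b_mono (hE : IsNUBasis 𝕜 E b bs) {H F : Finset ℕ} (h : H ⊆ F) :
    ‖∑ i ∈ H, b i‖ ≤ ‖∑ i ∈ F, b i‖ := by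
  have := supp_le hE (indF 𝕜 F) H
  rwa [indF_support, sum_indF_smul_of_subset h, sum_indF_smul_of_subset (le_refl F)] at this

end Aux
section Aux2

variable {𝕜 : Type*} [RCLike 𝕜] {E : Type*} [NormedAddCommGroup E] [NormedSpace 𝕜 E]
  {b : ℕ → E} {bs : ℕ → StrongDual 𝕜 E} {𝓕 : Set (Finset ℕ)}
  {X : Type*} [NormedAddCommGroup X] [NormedSpace 𝕜 X] {e : ℕ → X}

lemma empty_mem_comb (h𝓕 : IsCombFamily 𝓕) : ∅ ∈ 𝓕 :=
  h𝓕.2 _ (h𝓕.1 0) ∅ (Finset.empty_subset _)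

lemma setT_eq (h𝓕 : IsCombFamily 𝓕) (a : ℕ →₀ 𝕜) :
    {r : ℝ | ∃ F ∈ 𝓕, r = ‖∑ i ∈ F, a i • b i‖}
      = (fun H : Finset ℕ => ‖∑ i ∈ H, a i • b i‖) '' {H | H ∈ 𝓕 ∧ H ⊆ a.support} := by
  ext r; constructor
  · rintro ⟨F, hF, rfl⟩
    refine ⟨F ∩ a.support, ⟨h𝓕.2 F hF _ Finset.inter_subset_left, Finset.inter_subset_right⟩, ?_⟩
    refine congrArg _ (Finset.sum_subset Finset.inter_subset_left fun i hi hni => ?_)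
    have : a i = 0 := by
      by_contra h
      exact hni (Finset.mem_inter.mpr ⟨hi, Finsupp.mem_support_iff.mpr h⟩)
    simp [this]
  · rintro ⟨H, ⟨h1, _⟩, rfl⟩; exact ⟨H, h1, rfl⟩

lemma setT_fin (h𝓕 : IsCombFamily 𝓕) (a : ℕ →₀ 𝕜) :
    {r : ℝ | ∃ F ∈ 𝓕, r = ‖∑ i ∈ F, a i • b i‖}.Finite := by
  rw [setT_eq h𝓕 a]
  refine Set.Finite.image _ (Set.Finite.subset (a.support.powerset).finite_toSet ?_)
  intro H hH
  simpa [Finset.mem_powerset] using hH.2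

lemma setT_nonempty (h𝓕 : IsCombFamily 𝓕) (a : ℕ →₀ 𝕜) :
    {r : ℝ | ∃ F ∈ 𝓕, r = ‖∑ i ∈ F, a i • b i‖}.Nonempty :=
  ⟨_, ⟨∅, empty_mem_comb h𝓕, rfl⟩⟩

lemma le_normX (hX : IsXFE 𝕜 𝓕 E b X e) (h𝓕 : IsCombFamily 𝓕) (a : ℕ →₀ 𝕜)
    {F : Finset ℕ} (hF : F ∈ 𝓕) :
    ‖∑ i ∈ F, a i • b i‖ ≤ ‖∑ i ∈ a.support, a i • e i‖ := by
  rw [hX.norm_eq]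
  exact le_csSup (setT_fin h𝓕 a).bddAbove ⟨F, hF, rfl⟩

lemma normX_le (hX : IsXFE 𝕜 𝓕 E b X e) (h𝓕 : IsCombFamily 𝓕) (a : ℕ →₀ 𝕜)
    {C : ℝ} (hC : ∀ F ∈ 𝓕, ‖∑ i ∈ F, a i • b i‖ ≤ C) :
    ‖∑ i ∈ a.support, a i • e i‖ ≤ C := by
  rw [hX.norm_eq]
  exact csSup_le (setT_nonempty h𝓕 a) (by rintro r ⟨F, hF, rfl⟩; exact hC F hF)

lemma normX_attained (hX : IsXFE 𝕜 𝓕 E b X e) (h𝓕 : IsCombFamily 𝓕) (a : ℕ →₀ 𝕜) :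
    ∃ F ∈ 𝓕, F ⊆ a.support ∧ ‖∑ i ∈ a.support, a i • e i‖ = ‖∑ i ∈ F, a i • b i‖ := by
  have hmem := Set.Nonempty.csSup_mem (setT_nonempty (b := b) h𝓕 a) (setT_fin (b := b) h𝓕 a)
  rw [setT_eq h𝓕 a] at hmem
  obtain ⟨H, ⟨h1, h2⟩, heq⟩ := hmem
  refine ⟨H, h1, h2, ?_⟩
  rw [hX.norm_eq]
  rw [setT_eq h𝓕 a]
  exact heq.symm

lemma sum_ind_v {M : Type*} [AddCommGroup M] [Module 𝕜 M] (F : Finset ℕ) (v : ℕ → M) :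
    ∑ i ∈ (indF 𝕜 F).support, (indF 𝕜 F) i • v i = ∑ i ∈ F, v i := by
  rw [indF_support, sum_indF_smul_of_subset (le_refl F)]

lemma normX_ind_of_mem (hE : IsNUBasis 𝕜 E b bs) (hX : IsXFE 𝕜 𝓕 E b X e)
    (h𝓕 : IsCombFamily 𝓕) {F : Finset ℕ} (hF : F ∈ 𝓕) :
    ‖∑ i ∈ F, e i‖ = ‖∑ i ∈ F, b i‖ := by
  rw [← sum_ind_v (𝕜 := 𝕜) F e]
  refine le_antisymm ?_ ?_
  · refine normX_le hX h𝓕 _ fun G hG => ?_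
    rw [sum_indF_smul]
    exact norm_sum_b_mono hE Finset.inter_subset_right
  · have := le_normX hX h𝓕 (indF 𝕜 F) hF
    rwa [sum_indF_smul_of_subset (le_refl F)] at this

lemma normX_ind_of_not_mem (hX : IsXFE 𝕜 𝓕 E b X e)
    (h𝓕 : IsCombFamily 𝓕) {F : Finset ℕ} (hF : F ∉ 𝓕) :
    ∃ H ∈ 𝓕, H ⊆ F ∧ H ≠ F ∧ ‖∑ i ∈ F, e i‖ = ‖∑ i ∈ H, b i‖ := by
  obtain ⟨H, h1, h2, h3⟩ := normX_attained hX h𝓕 (indF 𝕜 F)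
  rw [indF_support] at h2
  refine ⟨H, h1, h2, fun hHF => hF (hHF ▸ h1), ?_⟩
  rw [← sum_ind_v (𝕜 := 𝕜) F e, h3, sum_indF_smul_of_subset h2]

lemma norm_sum_b_strict_mono (hsu : StrictlyUnconditional 𝕜 b) {H F : Finset ℕ}
    (h : H ⊂ F) : ‖∑ i ∈ H, b i‖ < ‖∑ i ∈ F, b i‖ := by
  obtain ⟨j, hjF, hjH⟩ := Finset.exists_of_ssubset h
  have key := hsu (indF 𝕜 H) (indF 𝕜 F) ?_ ?_
  · rw [indF_support, sum_indF_smul, Finset.inter_eq_right.mpr h.subset,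
      sum_indF_smul_of_subset (le_refl F)] at key
    exact key
  · intro i
    by_cases hiH : i ∈ H
    · simp [hiH, h.subset hiH]
    · simp [hiH]
  · exact ⟨j, by simp [hjF, hjH]⟩

/-- Characterization of membership in `𝓕` via norms of indicator vectors in `X`. -/
lemma charX (hE : IsNUBasis 𝕜 E b bs) (hsu : StrictlyUnconditional 𝕜 b)
    (hX : IsXFE 𝕜 𝓕 E b X e) (h𝓕 : IsCombFamily 𝓕) (F : Finset ℕ) :
    F ∈ 𝓕 ↔ ∀ H, H ⊂ F → ‖∑ i ∈ H, e i‖ < ‖∑ i ∈ F, e i‖ := by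
  constructor
  · intro hF H hHF
    have hH : H ∈ 𝓕 := h𝓕.2 F hF H hHF.subset
    rw [normX_ind_of_mem hE hX h𝓕 hF, normX_ind_of_mem hE hX h𝓕 hH]
    exact norm_sum_b_strict_mono hsu hHF
  · intro hall
    by_contra hF
    obtain ⟨H, hH𝓕, hHsub, hHne, hHeq⟩ := normX_ind_of_not_mem hX h𝓕 hF
    have hlt := hall H (lt_of_le_of_ne hHsub hHne)
    rw [hHeq, normX_ind_of_mem hE hX h𝓕 hH𝓕] at hlt
    exact lt_irrefl _ hlt

end Aux2
section Aux3

variable {𝕜 : Type*} [RCLike 𝕜] {E : Type*} [NormedAddCommGroup E] [NormedSpace 𝕜 E]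
  {b : ℕ → E} {bs : ℕ → StrongDual 𝕜 E} {𝓕₁ 𝓕₂ : Set (Finset ℕ)}
  {X₁ : Type*} [NormedAddCommGroup X₁] [NormedSpace 𝕜 X₁] {e₁ : ℕ → X₁}
  {X₂ : Type*} [NormedAddCommGroup X₂] [NormedSpace 𝕜 X₂] {e₂ : ℕ → X₂}

/-- If membership in `𝓕ⱼ` is characterized (in matching fashion) by a strict-monotonicity
condition on a norm function `Nⱼ` on finsets, and `N₂ (F.image π) = N₁ F`, then
`π(𝓕₁) = 𝓕₂`. -/
lemma family_eq_of_char (π : Equiv.Perm ℕ) (N₁ N₂ : Finset ℕ → ℝ)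
    (hkey : ∀ G : Finset ℕ, N₂ (G.image π) = N₁ G)
    (hc₁ : ∀ F, F ∈ 𝓕₁ ↔ ∀ H, H ⊂ F → N₁ H < N₁ F)
    (hc₂ : ∀ F, F ∈ 𝓕₂ ↔ ∀ H, H ⊂ F → N₂ H < N₂ F) :
    (fun F : Finset ℕ => Finset.image (⇑π) F) '' 𝓕₁ = 𝓕₂ := by
  have hiff : ∀ F : Finset ℕ, F ∈ 𝓕₁ ↔ F.image π ∈ 𝓕₂ := by
    intro F
    rw [hc₁, hc₂]
    constructor
    · intro h K hK
      set H := K.image π.symm with hHdef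
      have hKH : H.image π = K := by
        rw [hHdef, Finset.image_image]
        simpa using Finset.image_id
      have hHF : H ⊂ F := by
        rw [← Finset.image_ssubset_image (f := ⇑π) π.injective, hKH]
        exact hK
      rw [← hKH, hkey, hkey]
      exact h H hHF
    · intro h H hH
      have := h (H.image π) ((Finset.image_ssubset_image π.injective).mpr hH)
      rwa [hkey, hkey] at this
  ext G
  constructor
  · rintro ⟨F, hF, rfl⟩
    exact (hiff F).mp hF
  · intro hG
    refine ⟨G.image π.symm, ?_, ?_⟩
    · apply (hiff _).mpr
      have : (G.image ⇑π.symm).image ⇑π = G := by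
        rw [Finset.image_image]; simpa using Finset.image_id
      rwa [this]
    · show (G.image ⇑π.symm).image ⇑π = G
      rw [Finset.image_image]; simpa using Finset.image_id

lemma normX_image_eq (π : Equiv.Perm ℕ) (J : X₁ ≃ₗᵢ[𝕜] X₂)
    (hJ : ∀ i, J (e₁ i) = e₂ (π i)) (G : Finset ℕ) :
    ‖∑ i ∈ G.image ⇑π, e₂ i‖ = ‖∑ i ∈ G, e₁ i‖ := by
  rw [Finset.sum_image (fun x _ y _ h => π.injective h)]
  calc ‖∑ i ∈ G, e₂ (π i)‖ = ‖J (∑ i ∈ G, e₁ i)‖ := by rw [map_sum]; simp only [hJ]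
    _ = ‖∑ i ∈ G, e₁ i‖ := J.norm_map _

end Aux3
section Aux4

variable {𝕜 : Type*} [RCLike 𝕜] {E : Type*} [NormedAddCommGroup E] [NormedSpace 𝕜 E]
  {b : ℕ → E} {bs : ℕ → StrongDual 𝕜 E} {𝓕 : Set (Finset ℕ)}
  {X : Type*} [NormedAddCommGroup X] [NormedSpace 𝕜 X] {e : ℕ → X} {eStar : ℕ → StrongDual 𝕜 X}

lemma dense_span_basis (hE : IsNUBasis 𝕜 E b bs) :
    Dense (Submodule.span 𝕜 (Set.range b) : Set E) := by
  intro x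
  refine mem_closure_of_tendsto (hE.expansion x) (Filter.Eventually.of_forall fun N => ?_)
  exact Submodule.sum_mem _ fun i _ => Submodule.smul_mem _ _ (Submodule.subset_span ⟨i, rfl⟩)

lemma biortho_sum_eval {Y : Type*} [NormedAddCommGroup Y] [NormedSpace 𝕜 Y]
    {v : ℕ → Y} {vs : ℕ → StrongDual 𝕜 Y}
    (hbi : ∀ i j, vs i (v j) = if i = j then (1 : 𝕜) else 0)
    (F G : Finset ℕ) (a : ℕ → 𝕜) :
    (∑ i ∈ F, vs i) (∑ j ∈ G, a j • v j) = ∑ i ∈ F, if i ∈ G then a i else 0 := by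
  rw [ContinuousLinearMap.sum_apply]
  refine Finset.sum_congr rfl fun i _ => ?_
  rw [map_sum]
  simp only [map_smul, hbi, smul_eq_mul, mul_ite, mul_one, mul_zero, Finset.sum_ite_eq]

lemma biortho_sum_eval_support {Y : Type*} [NormedAddCommGroup Y] [NormedSpace 𝕜 Y]
    {v : ℕ → Y} {vs : ℕ → StrongDual 𝕜 Y}
    (hbi : ∀ i j, vs i (v j) = if i = j then (1 : 𝕜) else 0)
    (F : Finset ℕ) (a : ℕ →₀ 𝕜) :
    (∑ i ∈ F, vs i) (∑ j ∈ a.support, a j • v j) = ∑ i ∈ F, a i := by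
  rw [biortho_sum_eval hbi]
  refine Finset.sum_congr rfl fun i _ => ?_
  by_cases h : i ∈ a.support
  · simp [h]
  · simp [h, Finsupp.notMem_support_iff.mp h]

lemma opNorm_le_of_dense {Y : Type*} [NormedAddCommGroup Y] [NormedSpace 𝕜 Y] {v : ℕ → Y}
    (hd : Dense (Submodule.span 𝕜 (Set.range v) : Set Y)) (f : StrongDual 𝕜 Y) {M : ℝ}
    (hM : 0 ≤ M)
    (h : ∀ a : ℕ →₀ 𝕜, ‖f (∑ i ∈ a.support, a i • v i)‖ ≤ M * ‖∑ i ∈ a.support, a i • v i‖) :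
    ‖f‖ ≤ M := by
  refine ContinuousLinearMap.opNorm_le_bound _ hM fun x => ?_
  have hclosed : IsClosed {y : Y | ‖f y‖ ≤ M * ‖y‖} :=
    isClosed_le f.continuous.norm (continuous_const.mul continuous_norm)
  have hsub : (Submodule.span 𝕜 (Set.range v) : Set Y) ⊆ {y : Y | ‖f y‖ ≤ M * ‖y‖} := by
    intro y hy
    rw [SetLike.mem_coe] at hy
    obtain ⟨a, rfl⟩ := Finsupp.mem_span_range_iff_exists_finsupp.mp hy
    have hrw : (a.sum fun i c => c • v i) = ∑ i ∈ a.support, a i • v i := rfl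
    rw [hrw]
    exact h a
  exact hclosed.closure_subset_iff.mpr hsub (hd x)

lemma dual_norm_le_of_mem (hE : IsNUBasis 𝕜 E b bs) (hX : IsXFE 𝕜 𝓕 E b X e)
    (h𝓕 : IsCombFamily 𝓕)
    (heStar : ∀ i j, eStar i (e j) = if i = j then (1 : 𝕜) else 0)
    {F : Finset ℕ} (hF : F ∈ 𝓕) :
    ‖(∑ i ∈ F, eStar i : StrongDual 𝕜 X)‖ ≤ ‖(∑ i ∈ F, bs i : StrongDual 𝕜 E)‖ := by
  refine opNorm_le_of_dense hX.dense_span _ (norm_nonneg _) fun a => ?_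
  rw [biortho_sum_eval_support heStar F a]
  have h2 : (∑ i ∈ F, a i) = (∑ i ∈ F, bs i) (∑ j ∈ F, a j • b j) := by
    rw [biortho_sum_eval hE.biortho]
    exact (Finset.sum_congr rfl fun i hi => by simp [hi]).symm
  rw [h2]
  calc ‖(∑ i ∈ F, bs i) (∑ j ∈ F, a j • b j)‖
      ≤ ‖(∑ i ∈ F, bs i : StrongDual 𝕜 E)‖ * ‖∑ j ∈ F, a j • b j‖ :=
        ContinuousLinearMap.le_opNorm _ _
    _ ≤ ‖(∑ i ∈ F, bs i : StrongDual 𝕜 E)‖ * ‖∑ i ∈ a.support, a i • e i‖ := by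
        gcongr
        exact le_normX hX h𝓕 a hF

end Aux4
section Aux5

variable {𝕜 : Type*} [RCLike 𝕜] {E : Type*} [NormedAddCommGroup E] [NormedSpace 𝕜 E]
  {b : ℕ → E} {bs : ℕ → StrongDual 𝕜 E}

/-- Averaging over cyclic shifts: for a 1-symmetric basis,
`‖∑_{i∈F} b_i^*‖ ⬝ ‖∑_{i∈F} b_i‖ ≤ |F|`. -/
lemma sym_bound (hE : IsNUBasis 𝕜 E b bs) (hsym : IsSymmetricBasis 𝕜 b) (F : Finset ℕ) :
    ‖(∑ i ∈ F, bs i : StrongDual 𝕜 E)‖ * ‖∑ i ∈ F, b i‖ ≤ (F.card : ℝ) := by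
  classical
  rcases F.eq_empty_or_nonempty with rfl | hFne
  · simp
  haveI : NeZero F.card := ⟨Finset.card_ne_zero.mpr hFne⟩
  obtain ⟨i₀, hi₀⟩ := hFne
  have h1F : 0 < ‖∑ j ∈ F, b j‖ := by
    have : bs i₀ (∑ j ∈ F, b j) = 1 := by
      rw [map_sum]
      rw [Finset.sum_eq_single i₀ (fun j _ hj => by rw [hE.biortho]; simp [Ne.symm hj])
        (fun h => absurd hi₀ h)]
      rw [hE.biortho]; simp
    have hne : (∑ j ∈ F, b j) ≠ 0 := fun h => by simp [h] at this
    exact norm_pos_iff.mpr hne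
  -- the permutations: cyclic shifts of F
  set n := F.card with hn
  set eqF := F.equivFin with heqF
  set permF : Fin n → Equiv.Perm {x // x ∈ F} :=
    fun k => eqF.trans ((Equiv.addRight k).trans eqF.symm) with hpermF
  set σ : Fin n → Equiv.Perm ℕ := fun k => (permF k).extendDomain (Equiv.refl _) with hσdef
  choose T hT using fun k : Fin n => hsym (σ k)
  have hσ : ∀ (k : Fin n) (i : ℕ) (hi : i ∈ F), σ k i = ((permF k) ⟨i, hi⟩ : ℕ) := by
    intro k i hi
    rw [hσdef]
    rw [Equiv.Perm.extendDomain_apply_subtype _ _ hi]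
    rfl
  have hinner : ∀ i ∈ F, ∑ k : Fin n, b (σ k i) = ∑ j ∈ F, b j := by
    intro i hi
    calc ∑ k : Fin n, b (σ k i)
        = ∑ k : Fin n, b ↑(eqF.symm (eqF ⟨i, hi⟩ + k)) := by
          refine Finset.sum_congr rfl fun k _ => ?_
          rw [hσ k i hi]
          simp [hpermF, Equiv.addRight]
      _ = ∑ m : Fin n, b ↑(eqF.symm m) :=
          Fintype.sum_equiv (Equiv.addLeft (eqF ⟨i, hi⟩))
            (fun k => b ↑(eqF.symm (eqF ⟨i, hi⟩ + k))) (fun m => b ↑(eqF.symm m))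
            (fun k => rfl)
      _ = ∑ j ∈ F, b j := by
          rw [← Finset.sum_coe_sort F b]
          exact Equiv.sum_comp eqF.symm (fun j => b ↑j)
  -- pointwise bound
  have key : ∀ a : ℕ →₀ 𝕜,
      ‖(∑ i ∈ F, bs i) (∑ j ∈ a.support, a j • b j)‖
        ≤ ((n : ℝ) / ‖∑ j ∈ F, b j‖) * ‖∑ j ∈ a.support, a j • b j‖ := by
    intro a
    rw [biortho_sum_eval_support hE.biortho F a]
    set x' : E := ∑ i ∈ F, a i • b i with hx'
    have hsup : ‖x'‖ ≤ ‖∑ j ∈ a.support, a j • b j‖ := supp_le hE a F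
    have hTx : ∀ k, T k x' = ∑ i ∈ F, a i • b (σ k i) := by
      intro k
      rw [hx', map_sum]
      exact Finset.sum_congr rfl fun i _ => by rw [LinearIsometryEquiv.map_smul, hT]
    have hz : ∑ k : Fin n, T k x' = (∑ i ∈ F, a i) • (∑ j ∈ F, b j) := by
      calc ∑ k : Fin n, T k x' = ∑ k : Fin n, ∑ i ∈ F, a i • b (σ k i) :=
            Finset.sum_congr rfl fun k _ => hTx k
        _ = ∑ i ∈ F, ∑ k : Fin n, a i • b (σ k i) := Finset.sum_comm
        _ = ∑ i ∈ F, a i • ∑ k : Fin n, b (σ k i) := by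
            refine Finset.sum_congr rfl fun i _ => ?_
            rw [Finset.smul_sum]
        _ = ∑ i ∈ F, a i • ∑ j ∈ F, b j :=
            Finset.sum_congr rfl fun i hi => by rw [hinner i hi]
        _ = (∑ i ∈ F, a i) • ∑ j ∈ F, b j := (Finset.sum_smul).symm
    have hnorm : ‖∑ i ∈ F, a i‖ * ‖∑ j ∈ F, b j‖ ≤ (n : ℝ) * ‖x'‖ := by
      rw [← norm_smul, ← hz]
      calc ‖∑ k : Fin n, T k x'‖ ≤ ∑ k : Fin n, ‖T k x'‖ := norm_sum_le _ _
        _ = ∑ _k : Fin n, ‖x'‖ :=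
            Finset.sum_congr rfl fun k _ => (T k).norm_map x'
        _ = (n : ℝ) * ‖x'‖ := by simp [Finset.sum_const, Fintype.card_fin]
    rw [div_mul_eq_mul_div, le_div_iff₀ h1F]
    calc ‖∑ i ∈ F, a i‖ * ‖∑ j ∈ F, b j‖ ≤ (n : ℝ) * ‖x'‖ := hnorm
      _ ≤ (n : ℝ) * ‖∑ j ∈ a.support, a j • b j‖ := by gcongr
  have hop : ‖(∑ i ∈ F, bs i : StrongDual 𝕜 E)‖ ≤ (n : ℝ) / ‖∑ j ∈ F, b j‖ :=
    opNorm_le_of_dense (dense_span_basis hE) _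
      (div_nonneg (Nat.cast_nonneg n) (norm_nonneg _)) key
  calc ‖(∑ i ∈ F, bs i : StrongDual 𝕜 E)‖ * ‖∑ i ∈ F, b i‖
      ≤ ((n : ℝ) / ‖∑ j ∈ F, b j‖) * ‖∑ j ∈ F, b j‖ := by gcongr
    _ = (n : ℝ) := div_mul_cancel₀ _ (ne_of_gt h1F)

lemma beta_image (hE : IsNUBasis 𝕜 E b bs) (hsym : IsSymmetricBasis 𝕜 b)
    (π : Equiv.Perm ℕ) (F : Finset ℕ) :
    ‖(∑ j ∈ F.image ⇑π, bs j : StrongDual 𝕜 E)‖ = ‖(∑ i ∈ F, bs i : StrongDual 𝕜 E)‖ := by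
  obtain ⟨T, hT⟩ := hsym π
  have h1 : (∑ j ∈ F.image ⇑π, bs j : StrongDual 𝕜 E) = ∑ i ∈ F, bs (π i) :=
    Finset.sum_image (fun x _ y _ h => π.injective h)
  have h2 : (∑ i ∈ F, bs (π i) : StrongDual 𝕜 E).comp
      (T.toLinearIsometry.toContinuousLinearMap) = ∑ i ∈ F, bs i := by
    refine ContinuousLinearMap.ext_on (dense_span_basis hE) ?_
    rintro y ⟨j, rfl⟩
    simp only [ContinuousLinearMap.coe_comp', Function.comp_apply,
      LinearIsometry.coe_toContinuousLinearMap, LinearIsometryEquiv.coe_toLinearIsometry,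
      ContinuousLinearMap.sum_apply, hT, hE.biortho]
    refine Finset.sum_congr rfl fun i _ => ?_
    simp [π.injective.eq_iff]
  calc ‖(∑ j ∈ F.image ⇑π, bs j : StrongDual 𝕜 E)‖ = ‖(∑ i ∈ F, bs (π i) : StrongDual 𝕜 E)‖ := by rw [h1]
    _ = ‖(∑ i ∈ F, bs (π i) : StrongDual 𝕜 E).comp (T.toLinearIsometry.toContinuousLinearMap)‖ :=
        (ContinuousLinearMap.opNorm_comp_linearIsometryEquiv _ T).symm
    _ = ‖(∑ i ∈ F, bs i : StrongDual 𝕜 E)‖ := by rw [h2]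

end Aux5
section Aux6

variable {𝕜 : Type*} [RCLike 𝕜] {E : Type*} [NormedAddCommGroup E] [NormedSpace 𝕜 E]
  {b : ℕ → E} {bs : ℕ → StrongDual 𝕜 E} {𝓕 : Set (Finset ℕ)}
  {X : Type*} [NormedAddCommGroup X] [NormedSpace 𝕜 X] {e : ℕ → X} {eStar : ℕ → StrongDual 𝕜 X}

/-- Characterization of membership in `𝓕` via dual norms of indicator functionals. -/
lemma charDual (hE : IsNUBasis 𝕜 E b bs) (hsu : StrictlyUnconditional 𝕜 b)
    (hsym : IsSymmetricBasis 𝕜 b) (h𝓕 : IsCombFamily 𝓕) (hX : IsXFE 𝕜 𝓕 E b X e)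
    (heStar : ∀ i j, eStar i (e j) = if i = j then (1 : 𝕜) else 0) (F : Finset ℕ) :
    F ∈ 𝓕 ↔ ‖(∑ i ∈ F, eStar i : StrongDual 𝕜 X)‖ ≤ ‖(∑ i ∈ F, bs i : StrongDual 𝕜 E)‖ := by
  constructor
  · exact fun hF => dual_norm_le_of_mem hE hX h𝓕 heStar hF
  · intro hle
    by_contra hF
    have hFne : F.Nonempty := by
      rcases F.eq_empty_or_nonempty with rfl | h
      · exact absurd (empty_mem_comb h𝓕) hF
      · exact h
    have hn : 0 < (F.card : ℝ) := by
      exact_mod_cast Finset.card_pos.mpr hFne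
    -- evaluation of the indicator functional at the indicator vector
    have heval : (∑ i ∈ F, eStar i) (∑ j ∈ F, e j) = (F.card : 𝕜) := by
      have hrw : (∑ j ∈ F, e j) = ∑ j ∈ F, (1 : 𝕜) • e j := by simp
      rw [hrw, biortho_sum_eval heStar]
      simp
    have hlow : (F.card : ℝ) ≤ ‖(∑ i ∈ F, eStar i : StrongDual 𝕜 X)‖ * ‖∑ j ∈ F, e j‖ := by
      calc (F.card : ℝ) = ‖((F.card : 𝕜))‖ := by simp
        _ = ‖(∑ i ∈ F, eStar i) (∑ j ∈ F, e j)‖ := by rw [heval]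
        _ ≤ ‖(∑ i ∈ F, eStar i : StrongDual 𝕜 X)‖ * ‖∑ j ∈ F, e j‖ :=
            ContinuousLinearMap.le_opNorm _ _
    obtain ⟨H, hH𝓕, hHsub, hHne, hHeq⟩ := normX_ind_of_not_mem hX h𝓕 hF
    have hXlt : ‖∑ i ∈ F, e i‖ < ‖∑ i ∈ F, b i‖ := by
      rw [hHeq]
      exact norm_sum_b_strict_mono hsu (lt_of_le_of_ne hHsub hHne)
    have hsymbd : ‖(∑ i ∈ F, bs i : StrongDual 𝕜 E)‖ * ‖∑ i ∈ F, b i‖ ≤ (F.card : ℝ) :=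
      sym_bound hE hsym F
    have hXnn : (0:ℝ) ≤ ‖∑ i ∈ F, e i‖ := norm_nonneg _
    have hgnn : (0:ℝ) ≤ ‖(∑ i ∈ F, eStar i : StrongDual 𝕜 X)‖ := norm_nonneg _
    have hbnn : (0:ℝ) ≤ ‖∑ i ∈ F, b i‖ := norm_nonneg _
    have hgpos : 0 < ‖(∑ i ∈ F, eStar i : StrongDual 𝕜 X)‖ := by nlinarith
    nlinarith [mul_le_mul_of_nonneg_right hle hbnn,
      mul_lt_mul_of_pos_left hXlt hgpos]

end Aux6
section Aux7

lemma family_eq_of_iff {𝓕₁ 𝓕₂ : Set (Finset ℕ)} (π : Equiv.Perm ℕ)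
    (hiff : ∀ F : Finset ℕ, F ∈ 𝓕₁ ↔ F.image ⇑π ∈ 𝓕₂) :
    (fun F : Finset ℕ => Finset.image (⇑π) F) '' 𝓕₁ = 𝓕₂ := by
  ext G
  constructor
  · rintro ⟨F, hF, rfl⟩
    exact (hiff F).mp hF
  · intro hG
    refine ⟨G.image ⇑π.symm, ?_, ?_⟩
    · apply (hiff _).mpr
      have : (G.image ⇑π.symm).image ⇑π = G := by
        rw [Finset.image_image]; simpa using Finset.image_id
      rwa [this]
    · show (G.image ⇑π.symm).image ⇑π = G
      rw [Finset.image_image]; simpa using Finset.image_id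

end Aux7

/-- Proposition (trucmachin), parts (1) and (2).
(1) If `(𝐞_i)` is strictly 1-unconditional, a permutation of `ℕ` inducing an isometry
`X_{𝓕₁,E} → X_{𝓕₂,E}` (via `e_i ↦ e_{π(i)}`) satisfies `π(𝓕₁) = 𝓕₂`.
(2) If `(𝐞_i)` is strictly 1-unconditional and 1-symmetric, a permutation inducing an
isometry `Z_{𝓕₁,E} → Z_{𝓕₂,E}` (via `e_i^* ↦ e_{π(i)}^*`) satisfies `π(𝓕₁) = 𝓕₂`. -/

theorem permutation_inducing_isometry_is_compatible
    {𝕜 : Type*} [RCLike 𝕜]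
    (E : Type*) [NormedAddCommGroup E] [NormedSpace 𝕜 E] [CompleteSpace E]
    (b : ℕ → E) (bs : ℕ → StrongDual 𝕜 E) (hE : IsNUBasis 𝕜 E b bs)
    (𝓕₁ 𝓕₂ : Set (Finset ℕ)) (h𝓕₁ : IsCombFamily 𝓕₁) (h𝓕₂ : IsCombFamily 𝓕₂)
    (X₁ : Type*) [NormedAddCommGroup X₁] [NormedSpace 𝕜 X₁] [CompleteSpace X₁]
    (e₁ : ℕ → X₁) (hX₁ : IsXFE 𝕜 𝓕₁ E b X₁ e₁)
    (eStar₁ : ℕ → StrongDual 𝕜 X₁)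
    (heStar₁ : ∀ i j, eStar₁ i (e₁ j) = if i = j then (1 : 𝕜) else 0)
    (X₂ : Type*) [NormedAddCommGroup X₂] [NormedSpace 𝕜 X₂] [CompleteSpace X₂]
    (e₂ : ℕ → X₂) (hX₂ : IsXFE 𝕜 𝓕₂ E b X₂ e₂)
    (eStar₂ : ℕ → StrongDual 𝕜 X₂)
    (heStar₂ : ∀ i j, eStar₂ i (e₂ j) = if i = j then (1 : 𝕜) else 0) :
    (StrictlyUnconditional 𝕜 b →
      ∀ (π : Equiv.Perm ℕ) (J : X₁ ≃ₗᵢ[𝕜] X₂), (∀ i, J (e₁ i) = e₂ (π i)) →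
        (fun F : Finset ℕ => Finset.image (⇑π) F) '' 𝓕₁ = 𝓕₂) ∧
    (StrictlyUnconditional 𝕜 b → IsSymmetricBasis 𝕜 b →
      ∀ (π : Equiv.Perm ℕ)
        (J : ↥((Submodule.span 𝕜 (Set.range eStar₁)).topologicalClosure) ≃ₗᵢ[𝕜]
          ↥((Submodule.span 𝕜 (Set.range eStar₂)).topologicalClosure)),
        (∀ i, (J ⟨eStar₁ i,
            Submodule.le_topologicalClosure _
              (Submodule.subset_span (Set.mem_range_self i))⟩ : StrongDual 𝕜 X₂) =
          eStar₂ (π i)) →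
        (fun F : Finset ℕ => Finset.image (⇑π) F) '' 𝓕₁ = 𝓕₂) := by
  constructor
  · intro hsu π J hJ
    exact family_eq_of_char π (fun F => ‖∑ i ∈ F, e₁ i‖) (fun F => ‖∑ i ∈ F, e₂ i‖)
      (normX_image_eq π J hJ) (charX hE hsu hX₁ h𝓕₁) (charX hE hsu hX₂ h𝓕₂)
  · intro hsu hsym π J hJ
    refine family_eq_of_iff π fun F => ?_
    have key : ‖(∑ i ∈ F.image ⇑π, eStar₂ i : StrongDual 𝕜 X₂)‖
        = ‖(∑ i ∈ F, eStar₁ i : StrongDual 𝕜 X₁)‖ := by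
      set gz : ↥((Submodule.span 𝕜 (Set.range eStar₁)).topologicalClosure) :=
        ∑ i ∈ F, ⟨eStar₁ i, Submodule.le_topologicalClosure _
          (Submodule.subset_span (Set.mem_range_self i))⟩ with hgz
      have hgzc : (gz : StrongDual 𝕜 X₁) = ∑ i ∈ F, eStar₁ i := by
        rw [hgz]; simp
      have hJc : ((J gz : ↥((Submodule.span 𝕜 (Set.range eStar₂)).topologicalClosure))
          : StrongDual 𝕜 X₂) = ∑ i ∈ F.image ⇑π, eStar₂ i := by
        have hms : ∀ g : ℕ → ↥((Submodule.span 𝕜 (Set.range eStar₁)).topologicalClosure),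
            J (∑ i ∈ F, g i) = ∑ i ∈ F, J (g i) := fun g => map_sum J.toLinearEquiv g F
        rw [Finset.sum_image (fun x _ y _ h => π.injective h), hgz, hms]
        simp only [AddSubmonoidClass.coe_finset_sum]
        exact Finset.sum_congr rfl fun i _ => hJ i
      calc ‖(∑ i ∈ F.image ⇑π, eStar₂ i : StrongDual 𝕜 X₂)‖
          = ‖((J gz : ↥((Submodule.span 𝕜 (Set.range eStar₂)).topologicalClosure))
              : StrongDual 𝕜 X₂)‖ := by rw [hJc]
        _ = ‖J gz‖ := rfl
        _ = ‖gz‖ := J.norm_map gz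
        _ = ‖(gz : StrongDual 𝕜 X₁)‖ := rfl
        _ = ‖(∑ i ∈ F, eStar₁ i : StrongDual 𝕜 X₁)‖ := by rw [hgzc]
    rw [charDual hE hsu hsym h𝓕₁ hX₁ heStar₁ F,
      charDual hE hsu hsym h𝓕₂ hX₂ heStar₂ (F.image ⇑π), key, beta_image hE hsym π F]
end
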